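/- Define the superpotential W(a,b,c) = b c² (4a³ + 2a²b + 4ac² − bc²) and set A = a·∂W/∂a, B = b·∂W/∂b, C = c·∂W/∂c. Then for all real numbers a, b, c one has the polynomial identity (1/768)·(64 A² + 160 B² + 16 C² − 64 AB − 64 AC − 64 BC) = (1/2) b² c⁴ (4a⁶ + 2a⁴b² − 24a⁴c² − 4a²c⁴ + b²c⁴). (This expresses that V = −(1/2) g^{ij} ∂W/∂α^i ∂W/∂α^j for the potential V and the DeWitt metric g_{ij} defined by the kinetic energy T = 2α'² + 12γ'² + 4α'β' + 8β'γ' + 16α'γ' with α = log a, β = log b, γ = log c.) -/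

import Mathlib

/-- The superpotential `W(a,b,c) = b c² (4a³ + 2a²b + 4ac² - bc²)` reproduces
the potential `V = (1/2) b² c⁴ (4a⁶ + 2a⁴b² - 24a⁴c² - 4a²c⁴ + b²c⁴)`:
with `A = a ∂W/∂a`, `B = b ∂W/∂b`, `C = c ∂W/∂c`, one has the polynomial
identity `(1/768)(64A² + 160B² + 16C² - 64AB - 64AC - 64BC)`
for all real `a`, `b`, `c`. -/
theorem superpotential_identity
    (W : ℝ → ℝ → ℝ → ℝ)
    (hW : W = fun a b c => b * c ^ 2 * (4 * a ^ 3 + 2 * a ^ 2 * b + 4 * a * c ^ 2 - b * c ^ 2))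
    (a b c : ℝ)
    (A B C : ℝ)
    (hA : A = a * deriv (fun x => W x b c) a)
    (hB : B = b * deriv (fun x => W a x c) b)
    (hC : C = c * deriv (fun x => W a b x) c) :
    (1 / 768) * (64 * A ^ 2 + 160 * B ^ 2 + 16 * C ^ 2
        - 64 * A * B - 64 * A * C - 64 * B * C)
      = (1 / 2) * b ^ 2 * c ^ 4 *
          (4 * a ^ 6 + 2 * a ^ 4 * b ^ 2 - 24 * a ^ 4 * c ^ 2
            - 4 * a ^ 2 * c ^ 4 + b ^ 2 * c ^ 4) := by
  subst hW
  have hda : deriv (fun x : ℝ =>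
      b * c ^ 2 * (4 * x ^ 3 + 2 * x ^ 2 * b + 4 * x * c ^ 2 - b * c ^ 2)) a
      = b * c ^ 2 * (12 * a ^ 2 + 4 * a * b + 4 * c ^ 2) := by
    have h := (((((hasDerivAt_pow 3 a).const_mul 4).add
        (((hasDerivAt_pow 2 a).mul_const b).const_mul 2)).add
        (((hasDerivAt_id a).mul_const (c ^ 2)).const_mul 4)).sub_const
        (b * c ^ 2)).const_mul (b * c ^ 2)
    have h2 : HasDerivAt (fun x : ℝ =>
        b * c ^ 2 * (4 * x ^ 3 + 2 * x ^ 2 * b + 4 * x * c ^ 2 - b * c ^ 2))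
        (b * c ^ 2 * (12 * a ^ 2 + 4 * a * b + 4 * c ^ 2)) a := by
      convert h using 1
      all_goals
        try funext x
        try simp only [id_eq, Pi.add_apply, Pi.sub_apply, Pi.mul_apply]
        try push_cast
        first | done | rfl | ring
    exact h2.deriv
  have hdb : deriv (fun x : ℝ =>
      x * c ^ 2 * (4 * a ^ 3 + 2 * a ^ 2 * x + 4 * a * c ^ 2 - x * c ^ 2)) b
      = c ^ 2 * (4 * a ^ 3 + 4 * a ^ 2 * b + 4 * a * c ^ 2 - 2 * b * c ^ 2) := by
    have h := (((hasDerivAt_id b).mul_const (c ^ 2)).mul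
        (((((hasDerivAt_const b (4 * a ^ 3)).add
          ((hasDerivAt_id b).const_mul (2 * a ^ 2))).add
          (hasDerivAt_const b (4 * a * c ^ 2))).sub
          ((hasDerivAt_id b).mul_const (c ^ 2)))))
    have h2 : HasDerivAt (fun x : ℝ =>
        x * c ^ 2 * (4 * a ^ 3 + 2 * a ^ 2 * x + 4 * a * c ^ 2 - x * c ^ 2))
        (c ^ 2 * (4 * a ^ 3 + 4 * a ^ 2 * b + 4 * a * c ^ 2 - 2 * b * c ^ 2)) b := by
      convert h using 1
      all_goals
        try funext x
        try simp only [id_eq, Pi.add_apply, Pi.sub_apply, Pi.mul_apply]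
        try push_cast
        first | done | rfl | ring
    exact h2.deriv
  have hdc : deriv (fun x : ℝ =>
      b * x ^ 2 * (4 * a ^ 3 + 2 * a ^ 2 * b + 4 * a * x ^ 2 - b * x ^ 2)) c
      = 2 * b * c * (4 * a ^ 3 + 2 * a ^ 2 * b + 4 * a * c ^ 2 - b * c ^ 2)
        + b * c ^ 2 * (8 * a * c - 2 * b * c) := by
    have h := (((hasDerivAt_pow 2 c).const_mul b).mul
        ((((hasDerivAt_const c (4 * a ^ 3)).add
          (hasDerivAt_const c (2 * a ^ 2 * b))).add
          ((hasDerivAt_pow 2 c).const_mul (4 * a))).sub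
          ((hasDerivAt_pow 2 c).const_mul b)))
    have h2 : HasDerivAt (fun x : ℝ =>
        b * x ^ 2 * (4 * a ^ 3 + 2 * a ^ 2 * b + 4 * a * x ^ 2 - b * x ^ 2))
        (2 * b * c * (4 * a ^ 3 + 2 * a ^ 2 * b + 4 * a * c ^ 2 - b * c ^ 2)
          + b * c ^ 2 * (8 * a * c - 2 * b * c)) c := by
      convert h using 1
      all_goals
        try funext x
        try simp only [id_eq, Pi.add_apply, Pi.sub_apply, Pi.mul_apply]
        try push_cast
        first | done | rfl | ring
    exact h2.deriv
  rw [hA, hB, hC]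
  simp only [hda, hdb, hdc]
  ring
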